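/- Let x : [0,∞) → C be a C¹ solution of x'(t) + x(t) = θ(t) f(x(t)) + (1 − θ(t)) T(x(t)), and suppose M := sup_{s ≥ 0} ( ‖f(x(s))‖ + ‖T(x(s))‖ ) < ∞, θ : [0,∞) → (0,1] is absolutely continuous, and γ = 1 − α. Then for every t ≥ 0, ‖x'(t)‖ ≤ e^{−γΘ(t)} ‖x'(0)‖ + M e^{−γΘ(t)} ∫₀ᵗ e^{γΘ(s)} |θ'(s)| ds, where Θ(t) = ∫₀ᵗ θ(s) ds. -/

import Mathlib

open MeasureTheory Filter Topology

lemma gron_aux {E : Type*} [NormedAddCommGroup E] [InnerProductSpace ℝ E]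
    (y yd : ℝ → E) (g : ℝ → ℝ) (t : ℝ) (ht : 0 ≤ t)
    (hy : ∀ s ∈ Set.Icc (0:ℝ) t, HasDerivAt y (yd s) s)
    (hgc : ContinuousOn g (Set.Icc 0 t))
    (hgca : ∀ s ∈ Set.Ioo (0:ℝ) t, ContinuousAt g s)
    (hgIoo : ContinuousOn g (Set.Ioo 0 t))
    (hg0 : ∀ s ∈ Set.Icc (0:ℝ) t, 0 ≤ g s)
    (hkey : ∀ s ∈ Set.Icc (0:ℝ) t, (inner ℝ (yd s) (y s) : ℝ) ≤ g s * ‖y s‖) :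
    ‖y t‖ ≤ ‖y 0‖ + ∫ s in (0:ℝ)..t, g s := by
  have h0t : (0:ℝ) ∈ Set.Icc (0:ℝ) t := ⟨le_refl _, ht⟩
  have htt : t ∈ Set.Icc (0:ℝ) t := ⟨ht, le_refl _⟩
  have hgint : IntervalIntegrable g volume 0 t := by
    apply ContinuousOn.intervalIntegrable
    rwa [Set.uIcc_of_le ht]
  have key : ∀ ε : ℝ, 0 < ε → ‖y t‖ ≤ (‖y 0‖ + ∫ s in (0:ℝ)..t, g s) + ε := by
    intro ε hε
    set ψ : ℝ → ℝ := fun s => (inner ℝ (y s) (y s) : ℝ) with hψdef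
    have hψnn : ∀ s, 0 ≤ ψ s := fun s => real_inner_self_nonneg
    have hψpos : ∀ s, 0 < ψ s + ε ^ 2 := fun s => by have := hψnn s; nlinarith
    have hψd : ∀ s ∈ Set.Icc (0:ℝ) t,
        HasDerivAt ψ (2 * (inner ℝ (yd s) (y s) : ℝ)) s := by
      intro s hs
      have := (hy s hs).inner ℝ (hy s hs)
      exact this.congr_deriv (by rw [real_inner_comm (y s) (yd s)]; ring)
    set F : ℝ → ℝ := fun s => (∫ τ in (0:ℝ)..s, g τ) - Real.sqrt (ψ s + ε ^ 2) with hFdef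
    have hsq : ∀ s ∈ Set.Icc (0:ℝ) t,
        HasDerivAt (fun r => Real.sqrt (ψ r + ε ^ 2))
          ((2 * (inner ℝ (yd s) (y s) : ℝ)) / (2 * Real.sqrt (ψ s + ε ^ 2))) s := by
      intro s hs
      have h1 : HasDerivAt (fun r => ψ r + ε ^ 2) (2 * (inner ℝ (yd s) (y s) : ℝ)) s :=
        (hψd s hs).add_const _
      exact h1.sqrt (ne_of_gt (hψpos s))
    have hFd : ∀ s ∈ Set.Ioo (0:ℝ) t,
        HasDerivAt F (g s - (2 * (inner ℝ (yd s) (y s) : ℝ)) / (2 * Real.sqrt (ψ s + ε ^ 2))) s := by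
      intro s hs
      have hint : HasDerivAt (fun r => ∫ τ in (0:ℝ)..r, g τ) (g s) s := by
        have hsub : IntervalIntegrable g volume 0 s := by
          apply hgint.mono_set
          rw [Set.uIcc_of_le ht, Set.uIcc_of_le hs.1.le]
          exact Set.Icc_subset_Icc le_rfl hs.2.le
        apply intervalIntegral.integral_hasDerivAt_right hsub
        · exact ⟨Set.Ioo 0 t, isOpen_Ioo.mem_nhds hs,
            hgIoo.aestronglyMeasurable measurableSet_Ioo⟩
        · exact hgca s hs
      exact hint.sub (hsq s (Set.Ioo_subset_Icc_self hs))
    have hFc : ContinuousOn F (Set.Icc 0 t) := by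
      apply ContinuousOn.sub
      · have := intervalIntegral.continuousOn_primitive_interval'
          (μ := volume) (f := g) hgint (by rw [Set.uIcc_of_le ht]; exact h0t)
        rwa [Set.uIcc_of_le ht] at this
      · intro s hs
        exact ((hsq s hs).continuousAt).continuousWithinAt
    have hmono : MonotoneOn F (Set.Icc 0 t) := by
      apply monotoneOn_of_deriv_nonneg (convex_Icc 0 t) hFc
      · intro s hs
        rw [interior_Icc] at hs
        exact (hFd s hs).differentiableAt.differentiableWithinAt
      · intro s hs
        rw [interior_Icc] at hs
        rw [(hFd s hs).deriv]
        have hs' := Set.Ioo_subset_Icc_self hs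
        have hkey' := hkey s hs'
        have hg0' := hg0 s hs'
        rw [sub_nonneg]
        rcases le_or_gt (inner ℝ (yd s) (y s) : ℝ) 0 with hneg | hpos
        · calc (2 * (inner ℝ (yd s) (y s) : ℝ)) / (2 * Real.sqrt (ψ s + ε ^ 2))
              ≤ 0 := div_nonpos_of_nonpos_of_nonneg (by linarith) (by positivity)
            _ ≤ g s := hg0'
        · have hsqrtpos : 0 < Real.sqrt (ψ s + ε ^ 2) := Real.sqrt_pos.2 (hψpos s)
          rw [div_le_iff₀ (by positivity)]
          have hy_le : ‖y s‖ ≤ Real.sqrt (ψ s + ε ^ 2) := by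
            have : ‖y s‖ = Real.sqrt (ψ s) := by
              rw [hψdef]
              simp [real_inner_self_eq_norm_sq, Real.sqrt_sq (norm_nonneg _)]
            rw [this]
            exact Real.sqrt_le_sqrt (by nlinarith [hψnn s])
          calc 2 * (inner ℝ (yd s) (y s) : ℝ) ≤ 2 * (g s * ‖y s‖) := by linarith
            _ ≤ g s * (2 * Real.sqrt (ψ s + ε ^ 2)) := by nlinarith
    have hF0t := hmono h0t htt ht
    have e0 : F 0 = - Real.sqrt (ψ 0 + ε ^ 2) := by simp [hFdef]
    have hyt : ‖y t‖ ≤ Real.sqrt (ψ t + ε ^ 2) := by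
      have : ‖y t‖ = Real.sqrt (ψ t) := by
        rw [hψdef]; simp [real_inner_self_eq_norm_sq, Real.sqrt_sq (norm_nonneg _)]
      rw [this]
      exact Real.sqrt_le_sqrt (by nlinarith)
    have hy0 : Real.sqrt (ψ 0 + ε ^ 2) ≤ ‖y 0‖ + ε := by
      have h1 : ψ 0 + ε ^ 2 ≤ (‖y 0‖ + ε) ^ 2 := by
        have : ψ 0 = ‖y 0‖ ^ 2 := by rw [hψdef]; simp [real_inner_self_eq_norm_sq]
        nlinarith [norm_nonneg (y 0)]
      calc Real.sqrt (ψ 0 + ε ^ 2) ≤ Real.sqrt ((‖y 0‖ + ε) ^ 2) := Real.sqrt_le_sqrt h1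
        _ = ‖y 0‖ + ε := Real.sqrt_sq (by positivity)
    simp only [hFdef] at hF0t e0
    have : Real.sqrt (ψ t + ε ^ 2) ≤ Real.sqrt (ψ 0 + ε ^ 2) + ∫ s in (0:ℝ)..t, g s := by
      have : (∫ τ in (0:ℝ)..(0:ℝ), g τ) - Real.sqrt (ψ 0 + ε ^ 2)
          ≤ (∫ τ in (0:ℝ)..t, g τ) - Real.sqrt (ψ t + ε ^ 2) := hF0t
      simp only [intervalIntegral.integral_same] at this
      linarith
    linarith
  by_contra hcon
  push_neg at hcon
  obtain ⟨ε, hε, hlt⟩ : ∃ ε > 0, (‖y 0‖ + ∫ s in (0:ℝ)..t, g s) + ε < ‖y t‖ :=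
    ⟨(‖y t‖ - (‖y 0‖ + ∫ s in (0:ℝ)..t, g s)) / 2, by linarith, by linarith⟩
  exact absurd (key ε hε) (by linarith)

set_option maxHeartbeats 1000000 in
theorem stmt10 {H : Type*} [NormedAddCommGroup H] [InnerProductSpace ℝ H]
    [CompleteSpace H]
    (C : Set H) (hCne : C.Nonempty) (hCcl : IsClosed C) (hCconv : Convex ℝ C)
    (f T : H → H) (hfC : Set.MapsTo f C C) (hTC : Set.MapsTo T C C)
    (α : ℝ) (hα0 : 0 ≤ α) (hα1 : α < 1)
    (hf : ∀ x ∈ C, ∀ y ∈ C, ‖f x - f y‖ ≤ α * ‖x - y‖)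
    (hT : ∀ x ∈ C, ∀ y ∈ C, ‖T x - T y‖ ≤ ‖x - y‖)
    (θ θ' : ℝ → ℝ) (hθ : ∀ t, 0 ≤ t → 0 < θ t ∧ θ t ≤ 1)
    (hθ'int : ∀ t, 0 ≤ t → IntervalIntegrable θ' volume 0 t)
    (hθFTC : ∀ t, 0 ≤ t → θ t = θ 0 + ∫ s in (0:ℝ)..t, θ' s)
    (x x' : ℝ → H) (hx' : ∀ t, 0 ≤ t → HasDerivAt x (x' t) t)
    (hx'c : Continuous x')
    (hode : ∀ t, 0 ≤ t →
      x' t + x t = θ t • f (x t) + (1 - θ t) • T (x t))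
    (hxC : ∀ t, 0 ≤ t → x t ∈ C)
    (M : ℝ)
    (hM : M = ⨆ s : Set.Ici (0:ℝ), (‖f (x s)‖ + ‖T (x s)‖))
    (hMfin : BddAbove (Set.range fun s : Set.Ici (0:ℝ) => ‖f (x s)‖ + ‖T (x s)‖)) :
    ∀ t, 0 ≤ t →
      ‖x' t‖ ≤ Real.exp (-((1 - α) * ∫ s in (0:ℝ)..t, θ s)) * ‖x' 0‖ +
        M * Real.exp (-((1 - α) * ∫ s in (0:ℝ)..t, θ s)) *
          ∫ s in (0:ℝ)..t, Real.exp ((1 - α) * ∫ τ in (0:ℝ)..s, θ τ) * |θ' s| := by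
  intro t ht
  set γ : ℝ := 1 - α with hγdef
  have hγpos : 0 < γ := by simp only [hγdef]; linarith
  set Θ : ℝ → ℝ := fun r => ∫ s in (0:ℝ)..r, θ s with hΘdef
  set G : ℝ → ℝ := fun τ => Real.exp (γ * Θ τ) * |θ' τ| with hGdef
  set Φ : ℝ → ℝ := fun r => ∫ τ in (0:ℝ)..r, G τ with hΦdef
  have hθ0 : ∀ r, 0 ≤ r → 0 < θ r := fun r hr => (hθ r hr).1
  have hθ1 : ∀ r, 0 ≤ r → θ r ≤ 1 := fun r hr => (hθ r hr).2
  -- continuity of θ on [0, ∞)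
  have hθcOn : ∀ b, 0 ≤ b → ContinuousOn θ (Set.Icc 0 b) := by
    intro b hb
    have h1 : ContinuousOn (fun r => θ 0 + ∫ s in (0:ℝ)..r, θ' s) (Set.Icc 0 b) := by
      apply continuousOn_const.add
      have := intervalIntegral.continuousOn_primitive_interval' (hθ'int b hb)
        (Set.left_mem_uIcc)
      rwa [Set.uIcc_of_le hb] at this
    exact h1.congr fun r hr => hθFTC r hr.1
  have hθCA : ∀ p : ℝ, 0 < p → ContinuousAt θ p := by
    intro p hp
    exact (hθcOn (p+1) (by linarith)).continuousAt (Icc_mem_nhds hp (by linarith))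
  -- integrability of θ
  have hθint : ∀ a b, 0 ≤ a → a ≤ b → IntervalIntegrable θ volume a b := by
    intro a b ha hab
    apply ContinuousOn.intervalIntegrable
    rw [Set.uIcc_of_le hab]
    exact (hθcOn b (ha.trans hab)).mono (Set.Icc_subset_Icc ha le_rfl)
  -- Θ facts
  have hΘadd : ∀ a b, 0 ≤ a → a ≤ b → Θ b - Θ a = ∫ s in a..b, θ s := by
    intro a b ha hab
    have := intervalIntegral.integral_add_adjacent_intervals
      (hθint 0 a le_rfl ha) (hθint a b ha hab)
    simp only [hΘdef]
    linarith
  have hΘmono : ∀ a b, 0 ≤ a → a ≤ b → Θ a ≤ Θ b := by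
    intro a b ha hab
    have h1 := hΘadd a b ha hab
    have h2 : 0 ≤ ∫ s in a..b, θ s :=
      intervalIntegral.integral_nonneg hab (fun u hu => (hθ0 u (ha.trans hu.1)).le)
    linarith
  have hΘle : ∀ a b, 0 ≤ a → a ≤ b → Θ b ≤ Θ a + (b - a) := by
    intro a b ha hab
    have h1 := hΘadd a b ha hab
    have h2 : (∫ s in a..b, θ s) ≤ ∫ _ in a..b, (1:ℝ) := by
      apply intervalIntegral.integral_mono_on hab (hθint a b ha hab)
        intervalIntegrable_const
      intro u hu
      exact hθ1 u (ha.trans hu.1)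
    rw [intervalIntegral.integral_const, smul_eq_mul, mul_one] at h2
    linarith
  have hΘ0 : Θ 0 = 0 := by simp [hΘdef]
  have hΘnn : ∀ b, 0 ≤ b → 0 ≤ Θ b := by
    intro b hb
    have := hΘmono 0 b le_rfl hb
    linarith
  have hΘcOn : ∀ b, 0 ≤ b → ContinuousOn Θ (Set.Icc 0 b) := by
    intro b hb
    have := intervalIntegral.continuousOn_primitive_interval'
      (hθint 0 b le_rfl hb) (Set.left_mem_uIcc)
    rwa [Set.uIcc_of_le hb] at this
  -- G and Φ facts
  have hGnn : ∀ τ, 0 ≤ G τ := by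
    intro τ
    simp only [hGdef]
    positivity
  have hGint : ∀ a b, 0 ≤ a → a ≤ b → IntervalIntegrable G volume a b := by
    intro a b ha hab
    have hb : 0 ≤ b := ha.trans hab
    have h1 : IntervalIntegrable G volume 0 b := by
      apply IntervalIntegrable.continuousOn_mul ((hθ'int b hb).abs)
      rw [Set.uIcc_of_le hb]
      exact Real.continuous_exp.comp_continuousOn (continuousOn_const.mul (hΘcOn b hb))
    apply h1.mono_set
    rw [Set.uIcc_of_le hab, Set.uIcc_of_le hb]
    exact Set.Icc_subset_Icc ha le_rfl
  have hΦadd : ∀ a b, 0 ≤ a → a ≤ b → Φ b - Φ a = ∫ s in a..b, G s := by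
    intro a b ha hab
    have := intervalIntegral.integral_add_adjacent_intervals
      (hGint 0 a le_rfl ha) (hGint a b ha hab)
    simp only [hΦdef]
    linarith
  have hΦmono : ∀ a b, 0 ≤ a → a ≤ b → Φ a ≤ Φ b := by
    intro a b ha hab
    have h1 := hΦadd a b ha hab
    have h2 : 0 ≤ ∫ s in a..b, G s :=
      intervalIntegral.integral_nonneg hab (fun u _ => hGnn u)
    linarith
  have hΦ0 : Φ 0 = 0 := by simp [hΦdef]
  have hΦnn : ∀ b, 0 ≤ b → 0 ≤ Φ b := by
    intro b hb
    have := hΦmono 0 b le_rfl hb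
    linarith
  have hΦcOn : ∀ b, 0 ≤ b → ContinuousOn Φ (Set.Icc 0 b) := by
    intro b hb
    have := intervalIntegral.continuousOn_primitive_interval'
      (hGint 0 b le_rfl hb) (Set.left_mem_uIcc)
    rwa [Set.uIcc_of_le hb] at this
  -- M facts
  have hMb : ∀ s, 0 ≤ s → ‖f (x s)‖ + ‖T (x s)‖ ≤ M := by
    intro s hs
    rw [hM]
    exact le_ciSup hMfin ⟨s, hs⟩
  have hMnn : 0 ≤ M := le_trans (by positivity) (hMb 0 le_rfl)
  -- explicit form of x'
  have hx'' : ∀ r, 0 ≤ r → x' r = θ r • f (x r) + (1 - θ r) • T (x r) - x r :=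
    fun r hr => eq_sub_of_add_eq (hode r hr)
  -- FTC for θ differences
  have hθdiff : ∀ s h : ℝ, 0 ≤ s → 0 ≤ h →
      θ (s + h) - θ s = ∫ τ in s..(s+h), θ' τ := by
    intro s h hs hh
    have hint1 : IntervalIntegrable θ' volume 0 s := hθ'int s hs
    have hint2 : IntervalIntegrable θ' volume s (s+h) := by
      apply (hθ'int (s+h) (by linarith)).mono_set
      rw [Set.uIcc_of_le (by linarith : s ≤ s + h), Set.uIcc_of_le (by linarith : (0:ℝ) ≤ s + h)]
      exact Set.Icc_subset_Icc hs le_rfl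
    have h3 := intervalIntegral.integral_add_adjacent_intervals hint1 hint2
    rw [hθFTC (s+h) (by linarith), hθFTC s hs]
    linarith
  -- key inequality for each h ∈ (0, 1]
  have key : ∀ h : ℝ, 0 < h → h ≤ 1 →
      Real.exp (γ * (Θ (t+h) - Θ h)) * ‖x (t+h) - x t‖ ≤
        ‖x (0+h) - x 0‖ + M * Real.exp (γ*h) * (h * Φ (t+h)) := by
    intro h hh0 hh1
    set w : ℝ → ℝ := fun s => γ * ∫ τ in (0:ℝ)..s, θ (τ + h) with hwdef
    set u : ℝ → H := fun s => x (s + h) - x s with hudef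
    set e : ℝ → ℝ := fun s => Real.exp (w s) with hedef
    set y : ℝ → H := fun s => e s • u s with hydef
    set yd : ℝ → H := fun s =>
      e s • (x' (s+h) - x' s) + (e s * (γ * θ (s+h))) • u s with hyddef
    set g : ℝ → ℝ := fun s => e s * (M * |θ (s+h) - θ s|) with hgdef
    have hepos : ∀ s, 0 < e s := fun s => Real.exp_pos _
    have hθh_int : ∀ s, 0 ≤ s → IntervalIntegrable (fun τ => θ (τ+h)) volume 0 s := by
      intro s hs
      have := (hθint h (s+h) hh0.le (by linarith)).comp_add_right h
      simpa using this
    have hθh_c : ∀ s, 0 ≤ s → ContinuousAt (fun r => θ (r+h)) s := by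
      intro s hs
      exact ContinuousAt.comp (g := θ) (f := fun r : ℝ => r + h) (hθCA (s+h) (by linarith))
        ((continuous_add_right h).continuousAt)
    have hw : ∀ s, 0 ≤ s → HasDerivAt w (γ * θ (s+h)) s := by
      intro s hs
      have h1 : HasDerivAt (fun r => ∫ τ in (0:ℝ)..r, θ (τ+h)) (θ (s+h)) s := by
        apply intervalIntegral.integral_hasDerivAt_right (hθh_int s hs)
        · refine ⟨Set.Ioi (-(h/2)), isOpen_Ioi.mem_nhds (by simpa using by linarith : s ∈ Set.Ioi (-(h/2))), ?_⟩
          apply ContinuousOn.aestronglyMeasurable _ measurableSet_Ioi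
          intro τ hτ
          have : (0:ℝ) < τ + h := by
            simp only [Set.mem_Ioi] at hτ
            linarith
          have hc : ContinuousAt (fun r : ℝ => θ (r+h)) τ :=
            ContinuousAt.comp (g := θ) (f := fun r : ℝ => r + h) (hθCA (τ+h) this)
              ((continuous_add_right h).continuousAt)
          exact hc.continuousWithinAt
        · exact hθh_c s hs
      exact h1.const_mul γ
    have hu : ∀ s, 0 ≤ s → HasDerivAt u (x' (s+h) - x' s) s := by
      intro s hs
      have h1 : HasDerivAt (fun r => x (r + h)) (x' (s + h)) s :=
        HasDerivAt.comp_add_const s h (hx' (s+h) (by linarith))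
      exact h1.sub (hx' s hs)
    have hy : ∀ s ∈ Set.Icc (0:ℝ) t, HasDerivAt y (yd s) s := by
      intro s hs
      have he : HasDerivAt e (e s * (γ * θ (s+h))) s := (hw s hs.1).exp
      exact he.smul (hu s hs.1)
    have hny : ∀ s, ‖y s‖ = e s * ‖u s‖ := by
      intro s
      simp only [hydef, hedef, norm_smul, Real.norm_eq_abs, Real.abs_exp]
    -- the inner product estimate
    have hkey : ∀ s ∈ Set.Icc (0:ℝ) t, (inner ℝ (yd s) (y s) : ℝ) ≤ g s * ‖y s‖ := by
      intro s hs
      have hs0 : (0:ℝ) ≤ s := hs.1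
      have hsh0 : (0:ℝ) ≤ s + h := by linarith
      have haC := hxC (s+h) hsh0
      have hbC := hxC s hs0
      have hθsh0 := hθ0 (s+h) hsh0
      have hθsh1 := hθ1 (s+h) hsh0
      have hΔ : x' (s+h) - x' s =
          θ (s+h) • (f (x (s+h)) - f (x s)) + (1 - θ (s+h)) • (T (x (s+h)) - T (x s))
            - (x (s+h) - x s) + (θ (s+h) - θ s) • (f (x s) - T (x s)) := by
        rw [hx'' (s+h) hsh0, hx'' s hs0]
        module
      have i1 : (inner ℝ (f (x (s+h)) - f (x s)) (u s) : ℝ) ≤ α * (‖u s‖ * ‖u s‖) := by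
        calc (inner ℝ (f (x (s+h)) - f (x s)) (u s) : ℝ)
            ≤ ‖f (x (s+h)) - f (x s)‖ * ‖u s‖ := real_inner_le_norm _ _
          _ ≤ (α * ‖x (s+h) - x s‖) * ‖u s‖ :=
              mul_le_mul_of_nonneg_right (hf _ haC _ hbC) (norm_nonneg _)
          _ = α * (‖u s‖ * ‖u s‖) := by simp only [hudef]; ring
      have i2 : (inner ℝ (T (x (s+h)) - T (x s)) (u s) : ℝ) ≤ ‖u s‖ * ‖u s‖ := by
        calc (inner ℝ (T (x (s+h)) - T (x s)) (u s) : ℝ)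
            ≤ ‖T (x (s+h)) - T (x s)‖ * ‖u s‖ := real_inner_le_norm _ _
          _ ≤ ‖x (s+h) - x s‖ * ‖u s‖ :=
              mul_le_mul_of_nonneg_right (hT _ haC _ hbC) (norm_nonneg _)
          _ = ‖u s‖ * ‖u s‖ := by simp only [hudef]
      have i3 : (inner ℝ (x (s+h) - x s) (u s) : ℝ) = ‖u s‖ * ‖u s‖ := by
        simp only [hudef]
        exact real_inner_self_eq_norm_mul_norm _
      have i4 : |(inner ℝ (f (x s) - T (x s)) (u s) : ℝ)| ≤ M * ‖u s‖ := by
        calc |(inner ℝ (f (x s) - T (x s)) (u s) : ℝ)|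
            ≤ ‖f (x s) - T (x s)‖ * ‖u s‖ := abs_real_inner_le_norm _ _
          _ ≤ (‖f (x s)‖ + ‖T (x s)‖) * ‖u s‖ :=
              mul_le_mul_of_nonneg_right (norm_sub_le _ _) (norm_nonneg _)
          _ ≤ M * ‖u s‖ := mul_le_mul_of_nonneg_right (hMb s hs0) (norm_nonneg _)
      have hsplit : (inner ℝ (x' (s+h) - x' s) (u s) : ℝ) ≤
          -(γ * θ (s+h)) * (‖u s‖ * ‖u s‖) + M * |θ (s+h) - θ s| * ‖u s‖ := by
        rw [hΔ]
        have hexp : (inner ℝ (θ (s+h) • (f (x (s+h)) - f (x s)) +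
            (1 - θ (s+h)) • (T (x (s+h)) - T (x s)) - (x (s+h) - x s) +
            (θ (s+h) - θ s) • (f (x s) - T (x s))) (u s) : ℝ) =
            θ (s+h) * (inner ℝ (f (x (s+h)) - f (x s)) (u s) : ℝ) +
            (1 - θ (s+h)) * (inner ℝ (T (x (s+h)) - T (x s)) (u s) : ℝ) -
            (inner ℝ (x (s+h) - x s) (u s) : ℝ) +
            (θ (s+h) - θ s) * (inner ℝ (f (x s) - T (x s)) (u s) : ℝ) := by
          rw [inner_add_left, inner_sub_left, inner_add_left, real_inner_smul_left,
            real_inner_smul_left, real_inner_smul_left]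
        rw [hexp, i3]
        have e1 : θ (s+h) * (inner ℝ (f (x (s+h)) - f (x s)) (u s) : ℝ)
            ≤ θ (s+h) * (α * (‖u s‖ * ‖u s‖)) :=
          mul_le_mul_of_nonneg_left i1 hθsh0.le
        have e2 : (1 - θ (s+h)) * (inner ℝ (T (x (s+h)) - T (x s)) (u s) : ℝ)
            ≤ (1 - θ (s+h)) * (‖u s‖ * ‖u s‖) :=
          mul_le_mul_of_nonneg_left i2 (by linarith)
        have e4 : (θ (s+h) - θ s) * (inner ℝ (f (x s) - T (x s)) (u s) : ℝ)
            ≤ |θ (s+h) - θ s| * (M * ‖u s‖) := by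
          calc (θ (s+h) - θ s) * (inner ℝ (f (x s) - T (x s)) (u s) : ℝ)
              ≤ |(θ (s+h) - θ s) * (inner ℝ (f (x s) - T (x s)) (u s) : ℝ)| := le_abs_self _
            _ = |θ (s+h) - θ s| * |(inner ℝ (f (x s) - T (x s)) (u s) : ℝ)| := abs_mul _ _
            _ ≤ |θ (s+h) - θ s| * (M * ‖u s‖) :=
                mul_le_mul_of_nonneg_left i4 (abs_nonneg _)
        simp only [hγdef]
        nlinarith [e1, e2, e4]
      -- assemble
      have hyval : (inner ℝ (yd s) (y s) : ℝ) =
          (e s * e s) * ((inner ℝ (x' (s+h) - x' s) (u s) : ℝ) +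
            (γ * θ (s+h)) * (inner ℝ (u s) (u s) : ℝ)) := by
        simp only [hyddef, hydef]
        rw [inner_add_left, real_inner_smul_left, real_inner_smul_left,
          real_inner_smul_right, real_inner_smul_right]
        ring
      rw [hyval, hny s]
      have huu : (inner ℝ (u s) (u s) : ℝ) = ‖u s‖ * ‖u s‖ := real_inner_self_eq_norm_mul_norm _
      rw [huu]
      have hb1 : (inner ℝ (x' (s+h) - x' s) (u s) : ℝ) + γ * θ (s+h) * (‖u s‖ * ‖u s‖)
          ≤ M * |θ (s+h) - θ s| * ‖u s‖ := by nlinarith [hsplit]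
      calc (e s * e s) * ((inner ℝ (x' (s+h) - x' s) (u s) : ℝ) + γ * θ (s+h) * (‖u s‖ * ‖u s‖))
          ≤ (e s * e s) * (M * |θ (s+h) - θ s| * ‖u s‖) := by
            apply mul_le_mul_of_nonneg_left hb1 (by positivity)
        _ = g s * (e s * ‖u s‖) := by simp only [hgdef]; ring
    -- continuity of g
    have hwCA : ∀ s, 0 ≤ s → ContinuousAt w s := fun s hs => (hw s hs).continuousAt
    have hgc : ContinuousOn g (Set.Icc 0 t) := by
      intro s hs
      apply ContinuousWithinAt.mul
      · exact (Real.continuous_exp.continuousAt.comp (hwCA s hs.1)).continuousWithinAt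
      · apply ContinuousWithinAt.mul continuousWithinAt_const
        exact (((hθh_c s hs.1).continuousWithinAt).sub ((hθcOn t ht) s hs)).abs
    have hgca : ∀ s ∈ Set.Ioo (0:ℝ) t, ContinuousAt g s := by
      intro s hs
      apply ContinuousAt.mul
      · exact Real.continuous_exp.continuousAt.comp (hwCA s hs.1.le)
      · exact continuousAt_const.mul (((hθh_c s hs.1.le).sub (hθCA s hs.1)).abs)
    have hgIoo : ContinuousOn g (Set.Ioo 0 t) := fun s hs => (hgca s hs).continuousWithinAt
    have hg0 : ∀ s ∈ Set.Icc (0:ℝ) t, 0 ≤ g s := by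
      intro s _
      simp only [hgdef]
      positivity
    have hG1 := gron_aux y yd g t ht hy hgc hgca hgIoo hg0 hkey
    -- rewrite ‖y t‖ and ‖y 0‖
    have hwt : ∀ s, 0 ≤ s → w s = γ * (Θ (s+h) - Θ h) := by
      intro s hs
      have h1 : (∫ τ in (0:ℝ)..s, θ (τ + h)) = ∫ τ in h..(s+h), θ τ := by
        have := intervalIntegral.integral_comp_add_right (a := (0:ℝ)) (b := s) (f := θ) h
        simpa using this
      have h2 := hΘadd h (s+h) hh0.le (by linarith)
      simp only [hwdef, h1, ← h2]
    have hw0 : w 0 = 0 := by simp [hwdef]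
    have hy0 : ‖y 0‖ = ‖x (0+h) - x 0‖ := by
      rw [hny 0]
      simp [hedef, hw0, hudef]
    have hyt : ‖y t‖ = Real.exp (γ * (Θ (t+h) - Θ h)) * ‖x (t+h) - x t‖ := by
      rw [hny t]
      simp [hedef, hwt t ht, hudef]
    -- bound the integral of g
    have hgbound : ∀ s ∈ Set.Icc (0:ℝ) t,
        g s ≤ (M * Real.exp (γ*h)) * (Φ (s+h) - Φ s) := by
      intro s hs
      have hs0 : (0:ℝ) ≤ s := hs.1
      have hsh0 : (0:ℝ) ≤ s + h := by linarith
      -- bound e s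
      have he1 : e s ≤ Real.exp (γ*h) * Real.exp (γ * Θ s) := by
        rw [hedef]
        simp only
        rw [hwt s hs0, ← Real.exp_add]
        apply Real.exp_le_exp.2
        have h2 := hΘle s (s+h) hs0 (by linarith)
        have h3 := hΘnn h hh0.le
        nlinarith
      -- bound |Δθ|
      have hθb : |θ (s+h) - θ s| ≤ ∫ τ in s..(s+h), |θ' τ| := by
        rw [hθdiff s h hs0 hh0.le]
        exact intervalIntegral.abs_integral_le_integral_abs (by linarith)
      have hθ'absint : IntervalIntegrable (fun τ => |θ' τ|) volume s (s+h) := by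
        apply ((hθ'int (s+h) hsh0).abs).mono_set
        rw [Set.uIcc_of_le (by linarith : s ≤ s + h), Set.uIcc_of_le hsh0]
        exact Set.Icc_subset_Icc hs0 le_rfl
      have hintnn : 0 ≤ ∫ τ in s..(s+h), |θ' τ| :=
        intervalIntegral.integral_nonneg (by linarith) (fun u _ => abs_nonneg _)
      have hstep : Real.exp (γ * Θ s) * ∫ τ in s..(s+h), |θ' τ| ≤ Φ (s+h) - Φ s := by
        rw [hΦadd s (s+h) hs0 (by linarith)]
        rw [← intervalIntegral.integral_const_mul]
        apply intervalIntegral.integral_mono_on (by linarith : s ≤ s + h)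
          (hθ'absint.const_mul _) (hGint s (s+h) hs0 (by linarith))
        intro τ hτ
        simp only [hGdef]
        apply mul_le_mul_of_nonneg_right _ (abs_nonneg _)
        exact Real.exp_le_exp.2 (mul_le_mul_of_nonneg_left (hΘmono s τ hs0 hτ.1) hγpos.le)
      calc g s = e s * (M * |θ (s+h) - θ s|) := rfl
        _ ≤ (Real.exp (γ*h) * Real.exp (γ * Θ s)) * (M * ∫ τ in s..(s+h), |θ' τ|) := by
            apply mul_le_mul he1 (mul_le_mul_of_nonneg_left hθb hMnn) (by positivity)
              (by positivity)
        _ = (M * Real.exp (γ*h)) * (Real.exp (γ * Θ s) * ∫ τ in s..(s+h), |θ' τ|) := by ring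
        _ ≤ (M * Real.exp (γ*h)) * (Φ (s+h) - Φ s) :=
            mul_le_mul_of_nonneg_left hstep (by positivity)
    -- integrate the bound
    have hΦcont : ContinuousOn Φ (Set.Icc 0 (t+h)) := hΦcOn (t+h) (by linarith)
    have hΦshift : ContinuousOn (fun s => Φ (s + h)) (Set.Icc 0 t) := by
      apply ContinuousOn.comp (g := Φ) (f := fun s : ℝ => s + h) hΦcont
        (continuous_add_right h).continuousOn
      intro s hs
      simp only [Set.mem_Icc] at hs ⊢
      exact ⟨by linarith [hs.1], by linarith [hs.2]⟩
    have hΦplain : ContinuousOn Φ (Set.Icc 0 t) :=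
      hΦcont.mono (Set.Icc_subset_Icc le_rfl (by linarith))
    have hgint : IntervalIntegrable g volume 0 t := by
      apply ContinuousOn.intervalIntegrable
      rwa [Set.uIcc_of_le ht]
    have hrhsint : IntervalIntegrable (fun s => (M * Real.exp (γ*h)) * (Φ (s+h) - Φ s))
        volume 0 t := by
      apply ContinuousOn.intervalIntegrable
      rw [Set.uIcc_of_le ht]
      exact continuousOn_const.mul (hΦshift.sub hΦplain)
    have hint1 : (∫ s in (0:ℝ)..t, g s) ≤
        ∫ s in (0:ℝ)..t, (M * Real.exp (γ*h)) * (Φ (s+h) - Φ s) :=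
      intervalIntegral.integral_mono_on ht hgint hrhsint hgbound
    have hΦint : ∀ a b, 0 ≤ a → a ≤ b → b ≤ t + h → IntervalIntegrable Φ volume a b := by
      intro a b ha hab hbt
      apply ContinuousOn.intervalIntegrable
      rw [Set.uIcc_of_le hab]
      exact hΦcont.mono (Set.Icc_subset_Icc ha hbt)
    have htrans : (∫ s in (0:ℝ)..t, (Φ (s+h) - Φ s)) ≤ h * Φ (t+h) := by
      have hshift : (∫ s in (0:ℝ)..t, Φ (s+h)) = ∫ s in h..(t+h), Φ s := by
        have := intervalIntegral.integral_comp_add_right (a := (0:ℝ)) (b := t) (f := Φ) h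
        simpa using this
      have hsub : (∫ s in (0:ℝ)..t, (Φ (s+h) - Φ s)) =
          (∫ s in (0:ℝ)..t, Φ (s+h)) - ∫ s in (0:ℝ)..t, Φ s := by
        apply intervalIntegral.integral_sub
        · apply ContinuousOn.intervalIntegrable
          rwa [Set.uIcc_of_le ht]
        · exact hΦint 0 t le_rfl ht (by linarith)
      have split1 : (∫ s in (0:ℝ)..h, Φ s) + (∫ s in h..(t+h), Φ s) =
          ∫ s in (0:ℝ)..(t+h), Φ s :=
        intervalIntegral.integral_add_adjacent_intervals
          (hΦint 0 h le_rfl hh0.le (by linarith))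
          (hΦint h (t+h) hh0.le (by linarith) le_rfl)
      have split2 : (∫ s in (0:ℝ)..t, Φ s) + (∫ s in t..(t+h), Φ s) =
          ∫ s in (0:ℝ)..(t+h), Φ s :=
        intervalIntegral.integral_add_adjacent_intervals
          (hΦint 0 t le_rfl ht (by linarith))
          (hΦint t (t+h) ht (by linarith) le_rfl)
      have hb1 : (∫ s in t..(t+h), Φ s) ≤ h * Φ (t+h) := by
        have : (∫ s in t..(t+h), Φ s) ≤ ∫ _ in t..(t+h), Φ (t+h) := by
          apply intervalIntegral.integral_mono_on (by linarith)
            (hΦint t (t+h) ht (by linarith) le_rfl) intervalIntegrable_const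
          intro u hu
          exact hΦmono u (t+h) (ht.trans hu.1) hu.2
        rw [intervalIntegral.integral_const, smul_eq_mul] at this
        calc (∫ s in t..(t+h), Φ s) ≤ (t + h - t) * Φ (t+h) := this
          _ = h * Φ (t+h) := by ring
      have hb2 : 0 ≤ ∫ s in (0:ℝ)..h, Φ s :=
        intervalIntegral.integral_nonneg hh0.le (fun u hu => hΦnn u hu.1)
      linarith [hsub, hshift ▸ hsub]
    -- put everything together
    have hconst : (∫ s in (0:ℝ)..t, (M * Real.exp (γ*h)) * (Φ (s+h) - Φ s)) =
        (M * Real.exp (γ*h)) * ∫ s in (0:ℝ)..t, (Φ (s+h) - Φ s) :=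
      intervalIntegral.integral_const_mul _ _
    rw [hyt, hy0] at hG1
    have hfin : (∫ s in (0:ℝ)..t, g s) ≤ M * Real.exp (γ*h) * (h * Φ (t+h)) := by
      calc (∫ s in (0:ℝ)..t, g s)
          ≤ ∫ s in (0:ℝ)..t, (M * Real.exp (γ*h)) * (Φ (s+h) - Φ s) := hint1
        _ = (M * Real.exp (γ*h)) * ∫ s in (0:ℝ)..t, (Φ (s+h) - Φ s) := hconst
        _ ≤ (M * Real.exp (γ*h)) * (h * Φ (t+h)) :=
            mul_le_mul_of_nonneg_left htrans (by positivity)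
    linarith
  -- now take the limit h → 0⁺
  have keylim : Real.exp (γ * Θ t) * ‖x' t‖ ≤ ‖x' 0‖ + M * Φ t := by
    set L : ℝ → ℝ := fun h => Real.exp (γ * (Θ (t+h) - Θ h)) * ‖h⁻¹ • (x (t + h) - x t)‖
      with hLdef
    set R : ℝ → ℝ := fun h => ‖h⁻¹ • (x (0 + h) - x 0)‖ + M * Real.exp (γ*h) * Φ (t+h)
      with hRdef
    have hlimmap : ∀ t0 : ℝ, 0 ≤ t0 →
        Tendsto (fun h : ℝ => t0 + h) (nhdsWithin 0 (Set.Ioi 0))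
          (nhdsWithin t0 (Set.Icc 0 (t0+1))) := by
      intro t0 ht0
      apply tendsto_nhdsWithin_of_tendsto_nhds_of_eventually_within
      · have : Tendsto (fun h : ℝ => t0 + h) (nhdsWithin 0 (Set.Ioi 0)) (nhds (t0 + 0)) :=
          (tendsto_const_nhds.add (tendsto_id.mono_left nhdsWithin_le_nhds))
        simpa using this
      · filter_upwards [Ioo_mem_nhdsGT_of_mem (Set.mem_Ico.2 ⟨le_rfl, zero_lt_one⟩)] with h hh
        exact ⟨by linarith [hh.1], by linarith [hh.2]⟩
    have hΘlim : ∀ t0 : ℝ, 0 ≤ t0 →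
        Tendsto (fun h : ℝ => Θ (t0 + h)) (nhdsWithin 0 (Set.Ioi 0)) (nhds (Θ t0)) := by
      intro t0 ht0
      exact ((hΘcOn (t0+1) (by linarith)) t0 ⟨ht0, by linarith⟩).tendsto.comp (hlimmap t0 ht0)
    have hΦlim : Tendsto (fun h : ℝ => Φ (t + h)) (nhdsWithin 0 (Set.Ioi 0)) (nhds (Φ t)) :=
      ((hΦcOn (t+1) (by linarith)) t ⟨ht, by linarith⟩).tendsto.comp (hlimmap t ht)
    have hL : Tendsto L (nhdsWithin 0 (Set.Ioi 0)) (nhds (Real.exp (γ * Θ t) * ‖x' t‖)) := by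
      have h1 : Tendsto (fun h : ℝ => Real.exp (γ * (Θ (t+h) - Θ h)))
          (nhdsWithin 0 (Set.Ioi 0)) (nhds (Real.exp (γ * Θ t))) := by
        have h2 : Tendsto (fun h : ℝ => γ * (Θ (t+h) - Θ h)) (nhdsWithin 0 (Set.Ioi 0))
            (nhds (γ * (Θ t - Θ 0))) :=
          ((hΘlim t ht).sub (by simpa using hΘlim 0 le_rfl)).const_mul γ
        rw [hΘ0, sub_zero] at h2
        exact (Real.continuous_exp.tendsto _).comp h2
      have h3 : Tendsto (fun h : ℝ => ‖h⁻¹ • (x (t + h) - x t)‖)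
          (nhdsWithin 0 (Set.Ioi 0)) (nhds ‖x' t‖) :=
        ((hx' t ht).tendsto_slope_zero_right).norm
      exact h1.mul h3
    have hR : Tendsto R (nhdsWithin 0 (Set.Ioi 0)) (nhds (‖x' 0‖ + M * Φ t)) := by
      have h3 : Tendsto (fun h : ℝ => ‖h⁻¹ • (x (0 + h) - x 0)‖)
          (nhdsWithin 0 (Set.Ioi 0)) (nhds ‖x' 0‖) :=
        ((hx' 0 le_rfl).tendsto_slope_zero_right).norm
      have h4 : Tendsto (fun h : ℝ => M * Real.exp (γ*h) * Φ (t+h))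
          (nhdsWithin 0 (Set.Ioi 0)) (nhds (M * Real.exp (γ*0) * Φ t)) := by
        apply Tendsto.mul _ hΦlim
        apply Tendsto.const_mul
        exact (Real.continuous_exp.tendsto _).comp
          ((tendsto_id.mono_left nhdsWithin_le_nhds).const_mul γ)
      rw [mul_zero, Real.exp_zero, mul_one] at h4
      exact h3.add h4
    have hLR : ∀ᶠ h in nhdsWithin (0:ℝ) (Set.Ioi 0), L h ≤ R h := by
      filter_upwards [Ioo_mem_nhdsGT_of_mem (Set.mem_Ico.2 ⟨le_rfl, zero_lt_one⟩),
        self_mem_nhdsWithin] with h hh1 hh2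
      have hh0 : (0:ℝ) < h := hh2
      have hk := key h hh0 hh1.2.le
      simp only [hLdef, hRdef, norm_smul, Real.norm_eq_abs, abs_inv, abs_of_pos hh0]
      have hmul := mul_le_mul_of_nonneg_left hk (by positivity : (0:ℝ) ≤ h⁻¹)
      have heq1 : h⁻¹ * (M * Real.exp (γ*h) * (h * Φ (t+h))) =
          M * Real.exp (γ*h) * Φ (t+h) := by
        field_simp
      calc Real.exp (γ * (Θ (t+h) - Θ h)) * (h⁻¹ * ‖x (t + h) - x t‖)
          = h⁻¹ * (Real.exp (γ * (Θ (t+h) - Θ h)) * ‖x (t + h) - x t‖) := by ring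
        _ ≤ h⁻¹ * (‖x (0+h) - x 0‖ + M * Real.exp (γ*h) * (h * Φ (t+h))) := hmul
        _ = h⁻¹ * ‖x (0+h) - x 0‖ + h⁻¹ * (M * Real.exp (γ*h) * (h * Φ (t+h))) := by ring
        _ = h⁻¹ * ‖x (0+h) - x 0‖ + M * Real.exp (γ*h) * Φ (t+h) := by rw [heq1]
    exact le_of_tendsto_of_tendsto hL hR hLR
  -- conclude
  have hE : Real.exp (-(γ * Θ t)) * Real.exp (γ * Θ t) = 1 := by
    rw [← Real.exp_add]
    simp
  have hgoal : ‖x' t‖ ≤ Real.exp (-(γ * Θ t)) * ‖x' 0‖ +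
      M * Real.exp (-(γ * Θ t)) * Φ t := by
    have h2 := mul_le_mul_of_nonneg_left keylim (Real.exp_nonneg (-(γ * Θ t)))
    calc ‖x' t‖ = Real.exp (-(γ * Θ t)) * (Real.exp (γ * Θ t) * ‖x' t‖) := by
          rw [← mul_assoc, hE, one_mul]
      _ ≤ Real.exp (-(γ * Θ t)) * (‖x' 0‖ + M * Φ t) := h2
      _ = Real.exp (-(γ * Θ t)) * ‖x' 0‖ + M * Real.exp (-(γ * Θ t)) * Φ t := by ring
  exact hgoal
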